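/- Let s ≥ 1 and k ≥ 1 be integers and let p ∈ (0,1) be real with q = 1 − p and s·p > 1. Then Σ_{j=0}^{k−1} Σ_{i=0}^{j} (choose (j·s) i)·p^i·q^(j·s−i) < 1/(1 − exp(−2·s·(p − 1/s)^2)). -/

import Mathlib

open Real

lemma bernoulli_mgf (p q : ℝ) (hp0 : 0 < p) (hp1 : p < 1) (hq : q = 1 - p)
    (t : ℝ) (ht : 0 ≤ t) :
    q + p * Real.exp (-t) ≤ Real.exp (-p * t + t ^ 2 / 8) := by
  have hq0 : 0 < q := by simp [hq]; linarith
  set g : ℝ → ℝ := fun x => q + p * Real.exp (-x) with hg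
  have hgpos : ∀ x, 0 < g x := fun x => by positivity
  have hgd : ∀ x, HasDerivAt g (-(p * Real.exp (-x))) x := by
    intro x
    have : HasDerivAt (fun x : ℝ => Real.exp (-x)) (-Real.exp (-x)) x := by
      simpa [Function.comp_def] using (Real.hasDerivAt_exp (-x)).comp x (hasDerivAt_neg x)
    simpa [hg, mul_comm, neg_mul, mul_neg] using ((this.const_mul p).const_add q)
  set φ : ℝ → ℝ := fun x => -p + x / 4 + p * Real.exp (-x) / g x with hφ
  have hφd : ∀ x, HasDerivAt φ (1 / 4 - p * q * Real.exp (-x) / (g x) ^ 2) x := by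
    intro x
    have h1 : HasDerivAt (fun x : ℝ => p * Real.exp (-x)) (-(p * Real.exp (-x))) x := by
      have : HasDerivAt (fun x : ℝ => Real.exp (-x)) (-Real.exp (-x)) x := by
        simpa [Function.comp_def] using (Real.hasDerivAt_exp (-x)).comp x (hasDerivAt_neg x)
      simpa [mul_comm, neg_mul, mul_neg] using this.const_mul p
    have h2 : HasDerivAt (fun x => p * Real.exp (-x) / g x)
        ((-(p * Real.exp (-x)) * g x - p * Real.exp (-x) * (-(p * Real.exp (-x)))) / (g x) ^ 2) x :=
      h1.div (hgd x) (hgpos x).ne'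
    have h3 : HasDerivAt (fun x : ℝ => -p + x / 4) (1 / 4) x := by
      simpa using ((hasDerivAt_id x).div_const 4).const_add (-p)
    have h4 := h3.add h2
    refine h4.congr_deriv ?_
    have hgx := (hgpos x).ne'
    field_simp [hg]
    ring
  have hpq1 : q + p = 1 := by linarith
  have hφ0 : φ 0 = 0 := by
    simp [hφ, hg, hpq1]
  have hφmono : Monotone φ := by
    apply monotone_of_deriv_nonneg (fun x => (hφd x).differentiableAt)
    intro x
    rw [(hφd x).deriv]
    have key : 4 * (p * q * Real.exp (-x)) ≤ (g x) ^ 2 := by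
      show 4 * (p * q * Real.exp (-x)) ≤ (q + p * Real.exp (-x)) ^ 2
      nlinarith [sq_nonneg (q - p * Real.exp (-x))]
    have hg2 : 0 < (g x) ^ 2 := by positivity
    rw [sub_nonneg, div_le_iff₀ hg2]
    show p * q * Real.exp (-x) ≤ 1 / 4 * (q + p * Real.exp (-x)) ^ 2
    have key2 : 4 * (p * q * Real.exp (-x)) ≤ (q + p * Real.exp (-x)) ^ 2 := key
    linarith
  set h : ℝ → ℝ := fun x => -p * x + x ^ 2 / 8 - Real.log (g x) with hh
  have hhd : ∀ x, HasDerivAt h (φ x) x := by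
    intro x
    have hlog : HasDerivAt (fun x => Real.log (g x)) (-(p * Real.exp (-x)) / g x) x :=
      (hgd x).log (hgpos x).ne'
    have hpoly : HasDerivAt (fun x : ℝ => -p * x + x ^ 2 / 8) (-p + x * 2 / 8) x := by
      have h1 : HasDerivAt (fun x : ℝ => -p * x) (-p) x := by
        simpa using (hasDerivAt_id x).const_mul (-p)
      have h2 : HasDerivAt (fun x : ℝ => x ^ 2 / 8) (2 * x ^ 1 / 8) x :=
        (hasDerivAt_pow 2 x).div_const 8
      exact (h1.add h2).congr_deriv (by ring)
    have := hpoly.sub hlog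
    refine this.congr_deriv ?_
    simp only [hφ]
    have hgx := (hgpos x).ne'
    field_simp
    ring
  have hφnn : ∀ x, 0 ≤ x → 0 ≤ φ x := by
    intro x hx
    calc 0 = φ 0 := hφ0.symm
    _ ≤ φ x := hφmono hx
  have hhmono : MonotoneOn h (Set.Ici 0) := by
    apply monotoneOn_of_deriv_nonneg (convex_Ici 0)
      (fun x _ => (hhd x).differentiableAt.continuousAt.continuousWithinAt)
      (fun x _ => (hhd x).differentiableAt.differentiableWithinAt)
    intro x hx
    rw [(hhd x).deriv]
    exact hφnn x (le_of_lt (by simpa using hx))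
  have hh0 : h 0 = 0 := by
    simp [hh, hg, hpq1]
  have := hhmono (Set.self_mem_Ici) (Set.mem_Ici.mpr ht) ht
  rw [hh0] at this
  -- this : 0 ≤ h t
  have hlog : Real.log (g t) ≤ -p * t + t ^ 2 / 8 := by
    simp only [hh] at this; linarith
  calc g t = Real.exp (Real.log (g t)) := (Real.exp_log (hgpos t)).symm
  _ ≤ _ := Real.exp_le_exp.mpr hlog

lemma tail_chernoff (p q : ℝ) (hp0 : 0 ≤ p) (hq0 : 0 ≤ q)
    (n j : ℕ) (hjn : j ≤ n) (t : ℝ) (ht : 0 ≤ t) :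
    ∑ i ∈ Finset.range (j + 1), (Nat.choose n i : ℝ) * p ^ i * q ^ (n - i)
      ≤ Real.exp (t * j) * (p * Real.exp (-t) + q) ^ n := by
  have step1 : ∀ i ∈ Finset.range (j + 1),
      (Nat.choose n i : ℝ) * p ^ i * q ^ (n - i)
        ≤ Real.exp (t * ((j : ℝ) - i)) * ((Nat.choose n i : ℝ) * p ^ i * q ^ (n - i)) := by
    intro i hi
    have hij : i ≤ j := Nat.lt_succ_iff.mp (Finset.mem_range.mp hi)
    have h1 : (1 : ℝ) ≤ Real.exp (t * ((j : ℝ) - i)) := by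
      rw [← Real.exp_zero]
      apply Real.exp_le_exp.mpr
      have : (i : ℝ) ≤ j := Nat.cast_le.mpr hij
      nlinarith
    nlinarith [mul_nonneg (mul_nonneg (Nat.cast_nonneg (Nat.choose n i)) (pow_nonneg hp0 i)) (pow_nonneg hq0 (n-i))]
  calc ∑ i ∈ Finset.range (j + 1), (Nat.choose n i : ℝ) * p ^ i * q ^ (n - i)
      ≤ ∑ i ∈ Finset.range (j + 1),
          Real.exp (t * ((j : ℝ) - i)) * ((Nat.choose n i : ℝ) * p ^ i * q ^ (n - i)) :=
        Finset.sum_le_sum step1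
    _ ≤ ∑ i ∈ Finset.range (n + 1),
          Real.exp (t * ((j : ℝ) - i)) * ((Nat.choose n i : ℝ) * p ^ i * q ^ (n - i)) := by
        apply Finset.sum_le_sum_of_subset_of_nonneg
        · exact Finset.range_subset_range.mpr (by omega)
        · intro i _ _
          positivity
    _ = Real.exp (t * j) * (p * Real.exp (-t) + q) ^ n := by
        rw [add_pow, Finset.mul_sum]
        apply Finset.sum_congr rfl
        intro i _
        have h1 : Real.exp (t * ((j : ℝ) - i)) = Real.exp (t * j) * Real.exp (-t) ^ i := by
          rw [← Real.exp_nat_mul, ← Real.exp_add]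
          congr 1
          ring
        rw [h1, mul_pow]
        ring

section




/-- geometric bound on the sum of binomial lower tails. -/
theorem dave_tail_geometric_bound
    (s k : ℕ) (hs : 1 ≤ s) (hk : 1 ≤ k)
    (p q : ℝ) (hp0 : 0 < p) (hp1 : p < 1) (hq : q = 1 - p)
    (hsp : 1 < (s : ℝ) * p) :
    ∑ j ∈ Finset.range k, ∑ i ∈ Finset.range (j + 1),
        (Nat.choose (j * s) i : ℝ) * p ^ i * q ^ (j * s - i)
      < 1 / (1 - Real.exp (-2 * (s : ℝ) * (p - 1 / (s : ℝ)) ^ 2)) := by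
  have hq0 : 0 < q := by rw [hq]; linarith
  have hs0 : (0 : ℝ) < s := by exact_mod_cast hs
  set c : ℝ := p - 1 / (s : ℝ) with hc
  have hc0 : 0 < c := by
    rw [hc, sub_pos, div_lt_iff₀ hs0]
    linarith
  set t : ℝ := 4 * c with htdef
  have ht : 0 ≤ t := by positivity
  set r : ℝ := Real.exp (-2 * (s : ℝ) * c ^ 2) with hr
  have hr0 : 0 < r := Real.exp_pos _
  have hr1 : r < 1 := by
    rw [hr, Real.exp_lt_one_iff]
    nlinarith
  have key : ∀ j : ℕ, ∑ i ∈ Finset.range (j + 1),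
      (Nat.choose (j * s) i : ℝ) * p ^ i * q ^ (j * s - i) ≤ r ^ j := by
    intro j
    have hjn : j ≤ j * s := Nat.le_mul_of_pos_right j (by omega)
    calc ∑ i ∈ Finset.range (j + 1), (Nat.choose (j * s) i : ℝ) * p ^ i * q ^ (j * s - i)
        ≤ Real.exp (t * j) * (p * Real.exp (-t) + q) ^ (j * s) :=
          tail_chernoff p q hp0.le hq0.le (j * s) j hjn t ht
      _ ≤ Real.exp (t * j) * Real.exp (-p * t + t ^ 2 / 8) ^ (j * s) := by
          apply mul_le_mul_of_nonneg_left _ (Real.exp_pos _).le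
          apply pow_le_pow_left₀ (by positivity)
          rw [add_comm]
          exact bernoulli_mgf p q hp0 hp1 hq t ht
      _ = r ^ j := by
          rw [← Real.exp_nat_mul, ← Real.exp_add, hr, ← Real.exp_nat_mul]
          congr 1
          push_cast
          have hsc : (s : ℝ) * c = (s : ℝ) * p - 1 := by
            rw [hc]; field_simp
          rw [htdef]
          linear_combination (4 * c * (j : ℝ)) * hsc
  have hsum : ∑ j ∈ Finset.range k, ∑ i ∈ Finset.range (j + 1),
      (Nat.choose (j * s) i : ℝ) * p ^ i * q ^ (j * s - i)
      ≤ ∑ j ∈ Finset.range k, r ^ j :=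
    Finset.sum_le_sum fun j _ => key j
  have hgeom : ∑ j ∈ Finset.range k, r ^ j < 1 / (1 - r) := by
    rw [geom_sum_eq hr1.ne k]
    have h1r : 0 < 1 - r := by linarith
    have : (r ^ k - 1) / (r - 1) = (1 - r ^ k) / (1 - r) := by
      rw [← neg_div_neg_eq]
      ring_nf
    rw [this, div_lt_div_iff₀ h1r h1r]
    nlinarith [pow_pos hr0 k]
  exact lt_of_le_of_lt hsum hgeom
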